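/- Let T be a closed densely defined operator on a Hilbert space H whose numerical range is not contained in any strip {z : |Im(νz + μ)| ≤ c} (equivalently, T is not of the form η(A + iC) with A symmetric, C bounded selfadjoint, η ∈ ℂ). Then for all bounded X, Y, the block operator T̂ = [[T, X],[Y, −T]] on dom T ⊕ dom T satisfies dom T̂ ∩ dom T̂* = (dom T ∩ dom T*) ⊕ (dom T ∩ dom T*) and W(T̂) = ℂ. -/
import Mathlib


open scoped ComplexInnerProductSpace

open Complex in
private lemma convex_unbounded_eq_univ (S : Set ℂ) (hconv : Convex ℝ S)
    (hub : ∀ ν : ℂ, ν ≠ 0 → ∀ t : ℝ, ∃ z ∈ S, t < (ν * z).im) : S = Set.univ := by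
  have hne : S.Nonempty := by
    obtain ⟨z, hz, -⟩ := hub 1 one_ne_zero 0
    exact ⟨z, hz⟩
  have hcl : closure S = Set.univ := by
    by_contra h
    obtain ⟨x, hx⟩ := Set.ne_univ_iff_exists_notMem _ |>.mp h
    obtain ⟨f, u, hfx, hfb⟩ :=
      geometric_hahn_banach_point_closed hconv.closure isClosed_closure hx
    set ν : ℂ := ⟨f Complex.I, f 1⟩ with hν
    have hf : ∀ w : ℂ, f w = (ν * w).im := by
      intro w
      have hw : (w.re : ℝ) • (1:ℂ) + (w.im : ℝ) • Complex.I = w := by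
        simp [Complex.real_smul, Complex.re_add_im]
      calc f w = f ((w.re : ℝ) • (1:ℂ) + (w.im : ℝ) • Complex.I) := by rw [hw]
      _ = w.re * f 1 + w.im * f Complex.I := by
          rw [map_add, map_smul, map_smul, smul_eq_mul, smul_eq_mul]
      _ = (ν * w).im := by
          simp [Complex.mul_im, hν]; ring
    have hνne : ν ≠ 0 := by
      intro h0
      obtain ⟨z, hz⟩ := hne
      have h1 : f x < u := hfx
      have h2 : u < f z := hfb z (subset_closure hz)
      rw [hf x, h0] at h1
      rw [hf z, h0] at h2
      simp at h1 h2
      linarith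
    obtain ⟨z, hzS, hzt⟩ := hub (-ν) (neg_ne_zero.mpr hνne) (-u)
    have : u < f z := hfb z (subset_closure hzS)
    rw [hf z] at this
    have : (-ν * z).im = -(ν * z).im := by
      simp [Complex.neg_im]
    linarith [hzt, this ▸ hzt]
  have hspan : affineSpan ℝ S = ⊤ := by
    rw [← AffineSubspace.coe_eq_univ_iff]
    have h1 : closure S ⊆ (affineSpan ℝ S : Set ℂ) :=
      closure_minimal (subset_affineSpan ℝ S) (affineSpan ℝ S).closed_of_finiteDimensional
    rw [hcl] at h1
    exact Set.univ_subset_iff.mp h1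
  obtain ⟨y, hy⟩ := hconv.interior_nonempty_iff_affineSpan_eq_top.mpr hspan
  ext z
  simp only [Set.mem_univ, iff_true]
  rcases eq_or_ne z y with rfl | hzy
  · exact interior_subset hy
  · have h2z : (2 : ℝ) • z - y ∈ closure S := by rw [hcl]; trivial
    have hseg : z ∈ openSegment ℝ y ((2:ℝ) • z - y) := by
      refine ⟨1/2, 1/2, by norm_num, by norm_num, by norm_num, ?_⟩
      push_cast [Complex.real_smul]
      ring
    exact interior_subset (hconv.openSegment_interior_closure_subset_interior hy h2z hseg)

set_option maxHeartbeats 2000000 in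
open Complex in
private lemma th_segment {V : Type*} [AddCommGroup V] [Module ℂ V]
    (B N : V → V → ℂ)
    (hB : ∀ (a b : ℂ) (x y : V), B (a•x+b•y) (a•x+b•y)
        = (starRingEnd ℂ) a * a * B x x + (starRingEnd ℂ) a * b * B x y
          + (starRingEnd ℂ) b * a * B y x + (starRingEnd ℂ) b * b * B y y)
    (hN : ∀ (a b : ℂ) (x y : V), N (a•x+b•y) (a•x+b•y)
        = (starRingEnd ℂ) a * a * N x x + (starRingEnd ℂ) a * b * N x y
          + (starRingEnd ℂ) b * a * N y x + (starRingEnd ℂ) b * b * N y y)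
    (hNsymm : ∀ x y : V, N y x = (starRingEnd ℂ) (N x y))
    (hNpos : ∀ v : V, v ≠ 0 → 0 < (N v v).re)
    (w₁ w₂ : V) (h₁ : N w₁ w₁ = 1) (h₂ : N w₂ w₂ = 1)
    (a b : ℝ) (ha : 0 ≤ a) (hb : 0 ≤ b) (hab : a + b = 1) :
    ∃ w : V, N w w = 1 ∧ B w w = a • B w₁ w₁ + b • B w₂ w₂ := by
  have hsingle : ∀ (μ : ℂ) (x : V), B (μ • x) (μ • x) = (starRingEnd ℂ) μ * μ * B x x := by
    intro μ x
    have := hB μ 0 x 0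
    simpa using this
  have hNsingle : ∀ (μ : ℂ) (x : V), N (μ • x) (μ • x) = (starRingEnd ℂ) μ * μ * N x x := by
    intro μ x
    have := hN μ 0 x 0
    simpa using this
  set v₁ := B w₁ w₁ with hv₁
  set v₂ := B w₂ w₂ with hv₂
  by_cases hv : v₁ = v₂
  · refine ⟨w₁, h₁, ?_⟩
    rw [← hv₁, hv, ← add_smul, hab, one_smul]
  have hd : v₁ - v₂ ≠ 0 := sub_ne_zero.mpr hv
  set d := v₁ - v₂ with hdd
  set p := B w₁ w₂ with hp
  set q := B w₂ w₁ with hq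
  set np := N w₁ w₂ with hnp
  set P := (p - np * v₂) / d with hP
  set Q := (q - (starRingEnd ℂ) np * v₂) / d with hQ
  set A : ℝ := P.im + Q.im with hA
  set Bc : ℝ := Q.re - P.re with hBc
  obtain ⟨c, hc1, hc2⟩ : ∃ c : ℂ, (starRingEnd ℂ) c * c = 1 ∧
      ((starRingEnd ℂ) c * P + c * Q).im = 0 := by
    have him : ∀ c : ℂ, ((starRingEnd ℂ) c * P + c * Q).im = c.re * A + c.im * Bc := by
      intro c
      simp only [Complex.add_im, Complex.mul_im, Complex.conj_re, Complex.conj_im, hA, hBc]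
      ring
    by_cases hζ : A = 0 ∧ Bc = 0
    · exact ⟨1, by simp, by rw [him]; simp [hζ.1, hζ.2]⟩
    · set r : ℝ := Real.sqrt (A^2 + Bc^2) with hr
      have h2 : 0 < A^2 + Bc^2 := by
        rcases not_and_or.mp hζ with h | h
        · have h3 : 0 < A^2 := by positivity
          nlinarith [sq_nonneg Bc]
        · have h3 : 0 < Bc^2 := by positivity
          nlinarith [sq_nonneg A]
      have hrpos : 0 < r := Real.sqrt_pos.mpr h2
      have hr2 : r^2 = A^2 + Bc^2 := Real.sq_sqrt h2.le
      refine ⟨⟨Bc/r, -A/r⟩, ?_, ?_⟩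
      · have hn : Complex.normSq ⟨Bc/r, -A/r⟩ = 1 := by
          rw [Complex.normSq_mk]
          field_simp
          nlinarith [hr2]
        rw [mul_comm, Complex.mul_conj, hn, Complex.ofReal_one]
      · rw [him]
        show Bc/r * A + (-A/r) * Bc = 0
        field_simp
        ring
  set k : ℝ := ((starRingEnd ℂ) c * P + c * Q).re with hk
  have hkC : (starRingEnd ℂ) c * P + c * Q = (k : ℂ) := by
    apply Complex.ext
    · simp [hk]
    · simp [hc2]
  set e : ℝ := ((starRingEnd ℂ) c * np).re with he
  have hnpsum : (starRingEnd ℂ) c * np + c * (starRingEnd ℂ) np = ((2*e : ℝ) : ℂ) := by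
    have h5 : c * (starRingEnd ℂ) np = (starRingEnd ℂ) ((starRingEnd ℂ) c * np) := by
      rw [map_mul]; simp
    rw [h5, Complex.add_conj]
  have hnpsum' : (starRingEnd ℂ) c * np + c * (starRingEnd ℂ) np = 2 * (e:ℂ) := by
    rw [hnpsum]; push_cast; ring
  have hx2 : (starRingEnd ℂ) c * p + c * q = (k:ℂ) * d + (2 * (e:ℂ)) * v₂ := by
    have h6 : ((starRingEnd ℂ) c * P + c * Q) * d = (k:ℂ) * d := by rw [hkC]
    have hPd : P * d = p - np * v₂ := div_mul_cancel₀ _ hd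
    have hQd : Q * d = q - (starRingEnd ℂ) np * v₂ := div_mul_cancel₀ _ hd
    rw [← hnpsum']
    linear_combination h6 - (starRingEnd ℂ) c * hPd - c * hQd
  set ns : ℝ → ℝ := fun s => s^2 + (1-s)^2 + 2*s*(1-s)*e with hns
  set wf : ℝ → V := fun s => ((s:ℂ)*c) • w₁ + ((1-s : ℝ):ℂ) • w₂ with hwf
  have hNs : ∀ s : ℝ, N (wf s) (wf s) = ((ns s : ℝ) : ℂ) := by
    intro s
    show N (((s:ℂ)*c) • w₁ + ((1-s : ℝ):ℂ) • w₂) _ = _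
    rw [hN, h₁, h₂, ← hnp, hNsymm w₁ w₂, ← hnp]
    simp only [map_mul, Complex.conj_ofReal, hns]
    push_cast
    linear_combination ((s:ℂ))^2 * hc1 + (s:ℂ)*(1-(s:ℂ))*hnpsum'
  have hBs : ∀ s : ℝ, B (wf s) (wf s)
      = (s:ℂ)^2 * v₁ + (1-(s:ℂ))^2 * v₂ + (s:ℂ)*(1-(s:ℂ))*((k:ℂ)*d + 2*(e:ℂ)*v₂) := by
    intro s
    show B (((s:ℂ)*c) • w₁ + ((1-s : ℝ):ℂ) • w₂) _ = _
    rw [hB, ← hv₁, ← hv₂, ← hp, ← hq]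
    simp only [map_mul, Complex.conj_ofReal]
    push_cast
    linear_combination ((s:ℂ))^2 * v₁ * hc1 + (s:ℂ)*(1-(s:ℂ))*hx2
  have hwne : ∀ s : ℝ, 0 ≤ s → s ≤ 1 → wf s ≠ 0 := by
    intro s hs0 hs1 h0
    have hN00 : N (0 : V) (0 : V) = 0 := by
      have := hNsingle 0 (0 : V)
      simpa using this
    by_cases hs : s = 0
    · have hw2 : w₂ = 0 := by
        have h9 : wf 0 = w₂ := by simp [hwf]
        rw [hs] at h0
        rw [← h9]
        exact h0
      rw [hw2, hN00] at h₂
      exact zero_ne_one h₂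
    · have hcne : c ≠ 0 := by
        intro hc0
        rw [hc0] at hc1
        simp at hc1
      have hsne : ((s:ℂ)*c) ≠ 0 :=
        mul_ne_zero (Complex.ofReal_ne_zero.mpr hs) hcne
      set μ : ℂ := (((s:ℂ)*c))⁻¹ * (-((1-s : ℝ):ℂ)) with hμ
      have hw1 : w₁ = μ • w₂ := by
        have h7 : ((s:ℂ)*c) • w₁ = -(((1-s : ℝ):ℂ) • w₂) := by
          have := eq_neg_of_add_eq_zero_left h0
          exact this
        have h8 := congrArg (fun v : V => (((s:ℂ)*c))⁻¹ • v) h7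
        simp only [smul_smul, inv_mul_cancel₀ hsne, one_smul] at h8
        rw [hμ, ← smul_smul, neg_smul]
        exact h8
      have e1 : (1 : ℂ) = (starRingEnd ℂ) μ * μ := by
        rw [← h₁, hw1, hNsingle, h₂, mul_one]
      have e2 : v₁ = (starRingEnd ℂ) μ * μ * v₂ := by
        rw [hv₁, hw1, hsingle, ← hv₂]
      rw [← e1, one_mul] at e2
      exact hv e2
  have hnspos : ∀ s : ℝ, 0 ≤ s → s ≤ 1 → 0 < ns s := by
    intro s hs0 hs1
    have := hNpos _ (hwne s hs0 hs1)
    rw [hNs s] at this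
    simpa using this
  set H : ℝ → ℝ := fun s => (s^2 + s*(1-s)*k) / ns s with hH
  have hcont : ContinuousOn H (Set.Icc 0 1) := by
    apply ContinuousOn.div
    · fun_prop
    · fun_prop
    · exact fun s hs => ne_of_gt (hnspos s hs.1 hs.2)
  have hH0 : H 0 = 0 := by simp [hH, hns]
  have hH1 : H 1 = 1 := by norm_num [hH, hns]
  have hivt := intermediate_value_Icc (by norm_num : (0:ℝ) ≤ 1) hcont
  rw [hH0, hH1] at hivt
  obtain ⟨s, hsmem, hsa⟩ := hivt ⟨ha, by linarith⟩
  obtain ⟨hs0, hs1⟩ := hsmem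
  have hnss := hnspos s hs0 hs1
  have hcoef : s^2 + s*(1-s)*k = a * ns s := by
    have : (s^2 + s*(1-s)*k) / ns s = a := hsa
    field_simp at this
    linarith [this]
  set rr : ℝ := (Real.sqrt (ns s))⁻¹ with hrr
  have hrr2 : rr^2 * ns s = 1 := by
    rw [hrr, inv_pow, Real.sq_sqrt (le_of_lt hnss)]
    exact inv_mul_cancel₀ (ne_of_gt hnss)
  have hcoefC : (s:ℂ)^2 + (s:ℂ)*(1-(s:ℂ))*(k:ℂ)
      = (a:ℂ)*((s:ℂ)^2+(1-(s:ℂ))^2+2*(s:ℂ)*(1-(s:ℂ))*(e:ℂ)) := by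
    have h10 := congrArg (fun x : ℝ => (x : ℂ)) hcoef
    simp only [hns] at h10
    push_cast at h10
    linear_combination h10
  have hrr2C : ((rr:ℝ):ℂ)^2 * ((ns s : ℝ):ℂ) = 1 := by
    have h11 := congrArg (fun x : ℝ => (x : ℂ)) hrr2
    push_cast at h11
    linear_combination h11
  have hnsC : ((ns s : ℝ):ℂ) = (s:ℂ)^2 + (1-(s:ℂ))^2 + 2*(s:ℂ)*(1-(s:ℂ))*(e:ℂ) := by
    simp only [hns]
    push_cast
    ring
  have hfin : (s:ℂ)^2*v₁ + (1-(s:ℂ))^2*v₂ + (s:ℂ)*(1-(s:ℂ))*((k:ℂ)*d + 2*(e:ℂ)*v₂)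
      = ((ns s : ℝ):ℂ)*((a:ℂ)*v₁ + (1-(a:ℂ))*v₂) := by
    rw [hnsC, hdd]
    linear_combination (v₁ - v₂) * hcoefC
  refine ⟨((rr:ℝ):ℂ) • wf s, ?_, ?_⟩
  · rw [hNsingle, hNs, Complex.conj_ofReal, ← Complex.ofReal_mul, ← Complex.ofReal_mul,
      Complex.ofReal_eq_one]
    nlinarith [hrr2]
  · rw [hsingle, hBs, Complex.conj_ofReal]
    have hb' : b = 1 - a := by linarith
    rw [hb', Complex.real_smul, Complex.real_smul]
    push_cast
    linear_combination ((rr:ℂ)*(rr:ℂ))*hfin + ((a:ℂ)*v₁+(1-(a:ℂ))*v₂)*hrr2C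

/-- Let `T` be a closed densely defined operator whose numerical range is not
contained in any strip `{z : |Im (ν z + μ)| ≤ c}` (with `ν ≠ 0`).  Then for all bounded `X, Y`,
the block operator `T̂ = [[T, X],[Y, −T]]` on `dom T ⊕ dom T` in `H ⊕ H` satisfies
`dom T̂ ∩ dom T̂* = (dom T ∩ dom T*) ⊕ (dom T ∩ dom T*)` and `W(T̂) = ℂ`. -/
theorem block_full_numerical_range
    {E : Type*} [NormedAddCommGroup E] [InnerProductSpace ℂ E] [CompleteSpace E]
    (T : E →ₗ.[ℂ] E)
    (hdense : Dense (T.domain : Set E))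
    (hclosed : T.IsClosed)
    (hstrip : ¬ ∃ (ν μ : ℂ) (c : ℝ), ν ≠ 0 ∧
      ∀ u : T.domain, ‖(u : E)‖ = 1 → |(ν * ⟪T u, (u : E)⟫ + μ).im| ≤ c)
    (X Y : E →L[ℂ] E) :
    -- `dom T̂ ∩ dom T̂* = (dom T ∩ dom T*) ⊕ (dom T ∩ dom T*)`
    ({p : E × E | p.1 ∈ T.domain ∧ p.2 ∈ T.domain} ∩
        {p : E × E | ∃ w1 w2 : E, ∀ u1 u2 : T.domain,
          ⟪T u1 + X (u2 : E), p.1⟫ + ⟪Y (u1 : E) - T u2, p.2⟫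
            = ⟪(u1 : E), w1⟫ + ⟪(u2 : E), w2⟫}
      = {p : E × E | (p.1 ∈ T.domain ∧ p.1 ∈ T.adjoint.domain) ∧
          (p.2 ∈ T.domain ∧ p.2 ∈ T.adjoint.domain)}) ∧
    -- `W(T̂) = ℂ`
    (∀ z : ℂ, ∃ u1 u2 : T.domain, ‖(u1 : E)‖ ^ 2 + ‖(u2 : E)‖ ^ 2 = 1 ∧
      ⟪T u1 + X (u2 : E), (u1 : E)⟫ + ⟪Y (u1 : E) - T u2, (u2 : E)⟫ = z) := by
  classical
  constructor
  · -- the domain identity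
    ext p
    simp only [Set.mem_inter_iff, Set.mem_setOf_eq]
    constructor
    · rintro ⟨⟨hp1, hp2⟩, w1, w2, hw⟩
      refine ⟨⟨hp1, ?_⟩, hp2, ?_⟩
      · apply LinearPMap.mem_adjoint_domain_of_exists
        refine ⟨w1 - (ContinuousLinearMap.adjoint Y) p.2, fun x => ?_⟩
        have h := hw x 0
        simp only [ZeroMemClass.coe_zero, map_zero, add_zero, LinearPMap.map_zero, sub_zero,
          inner_zero_left] at h
        have h2 := congrArg (starRingEnd ℂ) h
        simp only [map_add, inner_conj_symm] at h2
        rw [inner_sub_left, ContinuousLinearMap.adjoint_inner_left]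
        linear_combination -h2
      · apply LinearPMap.mem_adjoint_domain_of_exists
        refine ⟨(ContinuousLinearMap.adjoint X) p.1 - w2, fun x => ?_⟩
        have h := hw 0 x
        simp only [ZeroMemClass.coe_zero, map_zero, zero_add, zero_sub, LinearPMap.map_zero,
          inner_zero_left, inner_neg_left] at h
        have h2 := congrArg (starRingEnd ℂ) h
        simp only [map_add, map_sub, map_neg, inner_conj_symm] at h2
        rw [inner_sub_left, ContinuousLinearMap.adjoint_inner_left]
        linear_combination h2
    · rintro ⟨⟨hp1, hp1'⟩, hp2, hp2'⟩
      refine ⟨⟨hp1, hp2⟩,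
        T.adjoint ⟨p.1, hp1'⟩ + (ContinuousLinearMap.adjoint Y) p.2,
        (ContinuousLinearMap.adjoint X) p.1 - T.adjoint ⟨p.2, hp2'⟩, fun u1 u2 => ?_⟩
      have hT1 : ⟪T u1, p.1⟫ = ⟪(u1 : E), T.adjoint ⟨p.1, hp1'⟩⟫ := by
        have h := (LinearPMap.adjoint_isFormalAdjoint hdense) (⟨p.1, hp1'⟩ : T.adjoint.domain) u1
        calc ⟪T u1, p.1⟫ = (starRingEnd ℂ) ⟪((⟨p.1, hp1'⟩ : T.adjoint.domain) : E), T u1⟫ :=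
            (inner_conj_symm _ _).symm
        _ = (starRingEnd ℂ) ⟪T.adjoint ⟨p.1, hp1'⟩, (u1 : E)⟫ := by rw [← h]
        _ = ⟪(u1 : E), T.adjoint ⟨p.1, hp1'⟩⟫ := inner_conj_symm _ _
      have hT2 : ⟪T u2, p.2⟫ = ⟪(u2 : E), T.adjoint ⟨p.2, hp2'⟩⟫ := by
        have h := (LinearPMap.adjoint_isFormalAdjoint hdense) (⟨p.2, hp2'⟩ : T.adjoint.domain) u2
        calc ⟪T u2, p.2⟫ = (starRingEnd ℂ) ⟪((⟨p.2, hp2'⟩ : T.adjoint.domain) : E), T u2⟫ :=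
            (inner_conj_symm _ _).symm
        _ = (starRingEnd ℂ) ⟪T.adjoint ⟨p.2, hp2'⟩, (u2 : E)⟫ := by rw [← h]
        _ = ⟪(u2 : E), T.adjoint ⟨p.2, hp2'⟩⟫ := inner_conj_symm _ _
      have hX : ⟪X (u2 : E), p.1⟫ = ⟪(u2 : E), (ContinuousLinearMap.adjoint X) p.1⟫ :=
        (ContinuousLinearMap.adjoint_inner_right _ _ _).symm
      have hY : ⟪Y (u1 : E), p.2⟫ = ⟪(u1 : E), (ContinuousLinearMap.adjoint Y) p.2⟫ :=
        (ContinuousLinearMap.adjoint_inner_right _ _ _).symm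
      rw [inner_add_left, inner_sub_left, inner_add_right, inner_sub_right,
        hT1, hT2, hX, hY]
      ring
  · -- the numerical range is all of ℂ
    push_neg at hstrip
    intro z
    set Bf : ↥T.domain × ↥T.domain → ↥T.domain × ↥T.domain → ℂ := fun w w' =>
      ⟪T w.1 + X (w.2 : E), (w'.1 : E)⟫ + ⟪Y (w.1 : E) - T w.2, (w'.2 : E)⟫ with hBf
    set Nf : ↥T.domain × ↥T.domain → ↥T.domain × ↥T.domain → ℂ := fun w w' =>
      ⟪(w.1 : E), (w'.1 : E)⟫ + ⟪(w.2 : E), (w'.2 : E)⟫ with hNf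
    have hBexp : ∀ (a b : ℂ) (x y : ↥T.domain × ↥T.domain), Bf (a•x+b•y) (a•x+b•y)
        = (starRingEnd ℂ) a * a * Bf x x + (starRingEnd ℂ) a * b * Bf x y
          + (starRingEnd ℂ) b * a * Bf y x + (starRingEnd ℂ) b * b * Bf y y := by
      intro a b x y
      simp only [hBf, Prod.fst_add, Prod.snd_add, Prod.smul_fst, Prod.smul_snd,
        LinearPMap.map_add, LinearPMap.map_smul, Submodule.coe_add, Submodule.coe_smul,
        map_add, map_smul, inner_add_left, inner_add_right, inner_smul_left, inner_smul_right,
        smul_add, smul_sub, inner_sub_left, inner_sub_right]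
      ring
    have hNexp : ∀ (a b : ℂ) (x y : ↥T.domain × ↥T.domain), Nf (a•x+b•y) (a•x+b•y)
        = (starRingEnd ℂ) a * a * Nf x x + (starRingEnd ℂ) a * b * Nf x y
          + (starRingEnd ℂ) b * a * Nf y x + (starRingEnd ℂ) b * b * Nf y y := by
      intro a b x y
      simp only [hNf, Prod.fst_add, Prod.snd_add, Prod.smul_fst, Prod.smul_snd,
        Submodule.coe_add, Submodule.coe_smul,
        inner_add_left, inner_add_right, inner_smul_left, inner_smul_right]
      ring
    have hNsymm : ∀ x y : ↥T.domain × ↥T.domain, Nf y x = (starRingEnd ℂ) (Nf x y) := by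
      intro x y
      simp only [hNf, map_add, inner_conj_symm]
    have hNre : ∀ v : ↥T.domain × ↥T.domain,
        (Nf v v).re = ‖(v.1 : E)‖^2 + ‖(v.2 : E)‖^2 := by
      intro v
      have e1 := inner_self_eq_norm_sq (𝕜 := ℂ) (v.1 : E)
      have e2 := inner_self_eq_norm_sq (𝕜 := ℂ) (v.2 : E)
      simp only [RCLike.re_to_complex] at e1 e2
      simp only [hNf, Complex.add_re, e1, e2]
    have hNpos : ∀ v : ↥T.domain × ↥T.domain, v ≠ 0 → 0 < (Nf v v).re := by
      intro v hv
      rw [hNre]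
      have hv1 : v.1 ≠ 0 ∨ v.2 ≠ 0 := by
        by_contra hc
        push_neg at hc
        exact hv (Prod.ext hc.1 hc.2)
      rcases hv1 with h | h
      · have : (0:ℝ) < ‖(v.1 : E)‖ := by
          simp only [norm_pos_iff]
          exact fun hh => h (Subtype.ext hh)
        nlinarith [sq_nonneg ‖(v.2 : E)‖, norm_nonneg (v.2 : E)]
      · have : (0:ℝ) < ‖(v.2 : E)‖ := by
          simp only [norm_pos_iff]
          exact fun hh => h (Subtype.ext hh)
        nlinarith [sq_nonneg ‖(v.1 : E)‖, norm_nonneg (v.1 : E)]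
    set S : Set ℂ := {ζ | ∃ w : ↥T.domain × ↥T.domain, Nf w w = 1 ∧ Bf w w = ζ} with hS
    have hSuniv : S = Set.univ := by
      apply convex_unbounded_eq_univ
      · -- convexity via Toeplitz–Hausdorff
        rintro ζ₁ ⟨w₁, hw₁n, hw₁v⟩ ζ₂ ⟨w₂, hw₂n, hw₂v⟩ aa bb haa hbb habb
        obtain ⟨w, hwn, hwv⟩ :=
          th_segment Bf Nf hBexp hNexp hNsymm hNpos w₁ w₂ hw₁n hw₂n aa bb haa hbb habb
        exact ⟨w, hwn, by rw [hwv, hw₁v, hw₂v]⟩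
      · -- unboundedness in every direction
        intro ν hν t
        obtain ⟨u, hu, hgt⟩ := hstrip ν 0 |t| hν
        rw [add_zero] at hgt
        set α : ℂ := ⟪T u, (u : E)⟫ with hα
        have huu : ⟪(u : E), (u : E)⟫ = (1 : ℂ) := by
          rw [inner_self_eq_norm_sq_to_K, hu]
          norm_num
        rcases lt_abs.mp hgt with hcase | hcase
        · refine ⟨α, ⟨(u, 0), ?_, ?_⟩, lt_of_le_of_lt (le_abs_self t) hcase⟩
          · simp only [hNf, ZeroMemClass.coe_zero, inner_zero_left, add_zero, huu]
          · simp only [hBf, ZeroMemClass.coe_zero, map_zero, add_zero, LinearPMap.map_zero,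
              sub_zero, inner_zero_right, hα]
        · refine ⟨-α, ⟨(0, u), ?_, ?_⟩, ?_⟩
          · simp only [hNf, ZeroMemClass.coe_zero, inner_zero_left, zero_add, huu]
          · simp only [hBf, ZeroMemClass.coe_zero, map_zero, zero_add, zero_sub,
              LinearPMap.map_zero, inner_zero_right, inner_neg_left, hα]
          · have him : (ν * -α).im = -(ν * α).im := by
              rw [mul_neg, Complex.neg_im]
            rw [him]
            exact lt_of_le_of_lt (le_abs_self t) hcase
    have hz : z ∈ S := by rw [hSuniv]; trivial
    obtain ⟨w, hwn, hwv⟩ := hz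
    refine ⟨w.1, w.2, ?_, ?_⟩
    · have := congrArg Complex.re hwn
      rw [hNre] at this
      simpa using this
    · simp only [hBf] at hwv
      exact hwv
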